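/- In a finite deterministic MDP with discount factor 0 ≤ γ < 1, a greedy policy with respect to the fixed point of the Bellman optimality operator is optimal: if Q* : S → A → ℝ satisfies T Q* = Q*, and π : S → A satisfies Q* s (π s) = ⨆ a : A, Q* s a for every state s, then V^π s = V* s for every state s. -/

import Mathlib

/-- In a finite deterministic MDP with `0 ≤ γ < 1`, a greedy policy with respect to
the fixed point of the Bellman optimality operator is optimal. -/
theorem greedy_policy_optimal
    {S A : Type*} [Fintype S] [Fintype A] [Nonempty S] [Nonempty A]
    (step : S → A → S) (r : S → A → ℝ) (γ : ℝ) (hγ0 : 0 ≤ γ) (hγ1 : γ < 1)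
    (traj : S → (ℕ → A) → ℕ → S)
    (htraj0 : ∀ s u, traj s u 0 = s)
    (htrajS : ∀ s u t, traj s u (t + 1) = step (traj s u t) (u t))
    (G : S → (ℕ → A) → ℝ)
    (hG : ∀ s u, G s u = ∑' t : ℕ, γ ^ t * r (traj s u t) (u t))
    (Vstar : S → ℝ)
    (hVstar : ∀ s : S, Vstar s = ⨆ u : ℕ → A, G s u)
    (T : (S → A → ℝ) → (S → A → ℝ))
    (hT : ∀ Q s a, T Q s a = r s a + γ * ⨆ a' : A, Q (step s a) a')
    (V : (S → A) → S → ℝ)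
    (hV : ∀ (π : S → A) (s : S),
      V π s = ∑' t : ℕ, γ ^ t *
        r ((fun x => step x (π x))^[t] s) (π ((fun x => step x (π x))^[t] s)))
    (Qstar : S → A → ℝ) (hfix : T Qstar = Qstar)
    (π : S → A) (hgreedy : ∀ s : S, Qstar s (π s) = ⨆ a : A, Qstar s a) :
    ∀ s : S, V π s = Vstar s := by
  classical
  set M : S → ℝ := fun s => ⨆ a : A, Qstar s a with hM
  have hbddA : ∀ s : S, BddAbove (Set.range fun a : A => Qstar s a) :=
    fun s => (Set.finite_range _).bddAbove
  have hQ : ∀ s a, Qstar s a = r s a + γ * M (step s a) := by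
    intro s a
    conv_lhs => rw [← hfix]
    rw [hT]
  have hQle : ∀ s a, Qstar s a ≤ M s := fun s a => le_ciSup (hbddA s) a
  obtain ⟨C, hC0, hC⟩ : ∃ C : ℝ, 0 ≤ C ∧ ∀ s a, |r s a| ≤ C := by
    obtain ⟨p, hp⟩ := Finite.exists_max (fun p : S × A => |r p.1 p.2|)
    exact ⟨|r p.1 p.2|, abs_nonneg _, fun s a => hp (s, a)⟩
  have hsum : ∀ (x : ℕ → S) (a : ℕ → A),
      Summable (fun t : ℕ => γ ^ t * r (x t) (a t)) := by
    intro x a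
    apply Summable.of_norm_bounded (g := fun t => C * γ ^ t)
      ((summable_geometric_of_lt_one hγ0 hγ1).mul_left C)
    intro t
    rw [Real.norm_eq_abs, abs_mul, abs_pow, abs_of_nonneg hγ0, mul_comm]
    exact mul_le_mul_of_nonneg_right (hC _ _) (pow_nonneg hγ0 t)
  obtain ⟨D, hD⟩ : ∃ D : ℝ, ∀ s, |M s| ≤ D := by
    obtain ⟨p, hp⟩ := Finite.exists_max (fun s : S => |M s|)
    exact ⟨|M p|, hp⟩
  have hMten : ∀ x : ℕ → S, Filter.Tendsto (fun n => γ ^ n * M (x n))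
      Filter.atTop (nhds 0) := by
    intro x
    have hgt : Filter.Tendsto (fun n : ℕ => D * γ ^ n) Filter.atTop (nhds 0) := by
      simpa using (tendsto_pow_atTop_nhds_zero_of_lt_one hγ0 hγ1).const_mul D
    refine squeeze_zero_norm ?_ hgt
    intro n
    rw [Real.norm_eq_abs, abs_mul, abs_pow, abs_of_nonneg hγ0, mul_comm]
    exact mul_le_mul_of_nonneg_right (hD _) (pow_nonneg hγ0 n)
  have hshift : ∀ s u t, traj s u (t + 1) = traj (step s (u 0)) (fun n => u (n + 1)) t := by
    intro s u t
    induction t with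
    | zero => rw [htrajS, htraj0, htraj0]
    | succ t ih => rw [htrajS, ih, htrajS]
  have key : ∀ (n : ℕ) (s : S) (u : ℕ → A),
      (∑ t ∈ Finset.range n, γ ^ t * r (traj s u t) (u t))
        + γ ^ n * M (traj s u n) ≤ M s := by
    intro n
    induction n with
    | zero => intro s u; simp [htraj0]
    | succ n ih =>
      intro s u
      have h1 := ih (step s (u 0)) (fun k => u (k + 1))
      calc (∑ t ∈ Finset.range (n+1), γ ^ t * r (traj s u t) (u t))
            + γ ^ (n+1) * M (traj s u (n+1))
          = γ * ((∑ t ∈ Finset.range n,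
              γ ^ t * r (traj (step s (u 0)) (fun k => u (k+1)) t) (u (t+1)))
              + γ ^ n * M (traj (step s (u 0)) (fun k => u (k+1)) n))
            + r s (u 0) := by
            rw [Finset.sum_range_succ']
            simp only [htraj0, hshift, pow_succ, pow_zero, one_mul, mul_add,
              Finset.mul_sum]
            simp only [mul_comm, mul_left_comm, mul_assoc]
            ring
        _ ≤ γ * M (step s (u 0)) + r s (u 0) := by
            have := mul_le_mul_of_nonneg_left h1 hγ0
            linarith
        _ = Qstar s (u 0) := by rw [hQ]; ring
        _ ≤ M s := hQle _ _
  have hGle : ∀ s u, G s u ≤ M s := by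
    intro s u
    rw [hG]
    have h1 := (hsum (traj s u) u).hasSum.tendsto_sum_nat
    have h2 : Filter.Tendsto (fun n => M s - γ ^ n * M (traj s u n))
        Filter.atTop (nhds (M s)) := by
      simpa using (tendsto_const_nhds (x := M s) (f := Filter.atTop)).sub
        (hMten (traj s u))
    refine le_of_tendsto_of_tendsto' h1 h2 ?_
    intro n
    have := key n s u
    linarith
  have keyπ : ∀ (s : S) (n : ℕ),
      (∑ t ∈ Finset.range n, γ ^ t * r ((fun y => step y (π y))^[t] s)
        (π ((fun y => step y (π y))^[t] s)))
      + γ ^ n * M ((fun y => step y (π y))^[n] s) = M s := by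
    intro s n
    induction n with
    | zero => simp
    | succ n ih =>
      rw [Finset.sum_range_succ, ← ih]
      have h1 : M ((fun y => step y (π y))^[n] s)
          = r ((fun y => step y (π y))^[n] s) (π ((fun y => step y (π y))^[n] s))
            + γ * M ((fun y => step y (π y))^[n+1] s) := by
        rw [Function.iterate_succ_apply']
        calc M ((fun y => step y (π y))^[n] s)
            = Qstar ((fun y => step y (π y))^[n] s) (π ((fun y => step y (π y))^[n] s)) :=
              (hgreedy _).symm
          _ = _ := hQ _ _
      rw [h1]
      ring
  have hVπ : ∀ s, V π s = M s := by
    intro s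
    rw [hV]
    have h1 := (hsum (fun t => (fun y => step y (π y))^[t] s)
        (fun t => π ((fun y => step y (π y))^[t] s))).hasSum.tendsto_sum_nat
    have h2 : Filter.Tendsto
        (fun n => M s - γ ^ n * M ((fun y => step y (π y))^[n] s))
        Filter.atTop (nhds (M s)) := by
      simpa using (tendsto_const_nhds (x := M s) (f := Filter.atTop)).sub
        (hMten (fun n => (fun y => step y (π y))^[n] s))
    have h3 : (fun n => ∑ t ∈ Finset.range n, γ ^ t * r ((fun y => step y (π y))^[t] s)
        (π ((fun y => step y (π y))^[t] s)))
        = fun n => M s - γ ^ n * M ((fun y => step y (π y))^[n] s) := by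
      funext n
      have := keyπ s n
      linarith
    exact tendsto_nhds_unique (h3 ▸ h1) h2
  intro s
  have hub : Vstar s ≤ M s := by
    rw [hVstar]; exact ciSup_le (fun u => hGle s u)
  have hlb : M s ≤ Vstar s := by
    rw [hVstar]
    have htr : ∀ t, traj s (fun t => π ((fun y => step y (π y))^[t] s)) t
        = (fun y => step y (π y))^[t] s := by
      intro t
      induction t with
      | zero => rw [htraj0]; simp
      | succ t ih => rw [htrajS, ih, Function.iterate_succ_apply']
    have hGu : G s (fun t => π ((fun y => step y (π y))^[t] s)) = M s := by
      rw [hG, ← hVπ s, hV]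
      congr 1; funext t; rw [htr t]
    have hbdd : BddAbove (Set.range fun u : ℕ → A => G s u) :=
      ⟨M s, by rintro _ ⟨u, rfl⟩; exact hGle s u⟩
    calc M s = G s _ := hGu.symm
      _ ≤ ⨆ u, G s u := le_ciSup hbdd _
  rw [hVπ s]
  linarith
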